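/- Surrogate-bias bound for a stopped-base, fixed-depth tail surrogate: under the assumptions ‖D_z Φ_x(z)‖ ≤ ρ < 1, ‖D_x Φ_x(z)‖ ≤ L_Φ, ‖D_z A_x(z)‖ ≤ L_A on a forward-invariant neighborhood, with Ψ_x^R(z) = A_x(Φ_x^R(z)) and z_T(x) the T-th base iterate, the difference between the full gradient ∇_x Ψ_x^R(z_T(x)) and the stop-gradient surrogate ∂_x Ψ_x^R(z)|_{z = z_T(x)} equals D_z Ψ_x^R(z_T(x)) ∘ D_x z_T(x), and its norm is at most (L_A L_Φ/(1 − ρ)) · ρ^R. -/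

import Mathlib

open ContinuousLinearMap

noncomputable def Wseq {X Z : Type*} [NormedAddCommGroup X] [NormedSpace ℝ X]
    [NormedAddCommGroup Z] [NormedSpace ℝ Z]
    (DΦx : X → Z → (X →L[ℝ] Z)) (DΦz : X → Z → (Z →L[ℝ] Z))
    (zseq : ℕ → X → Z) : ℕ → X → (X →L[ℝ] Z)
  | 0 => fun _ => 0
  | (t+1) => fun x => DΦx x (zseq t x) + (DΦz x (zseq t x)).comp (Wseq DΦx DΦz zseq t x)

noncomputable def Gseq {X Z : Type*} [NormedAddCommGroup X] [NormedSpace ℝ X]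
    [NormedAddCommGroup Z] [NormedSpace ℝ Z]
    (Φ : X → Z → Z) (DΦz : X → Z → (Z →L[ℝ] Z)) (x : X) : ℕ → Z → (Z →L[ℝ] Z)
  | 0 => fun _ => ContinuousLinearMap.id ℝ Z
  | (R+1) => fun z => (Gseq Φ DΦz x R (Φ x z)).comp (DΦz x z)

noncomputable def DFit {X Z : Type*} [NormedAddCommGroup X] [NormedSpace ℝ X]
    [NormedAddCommGroup Z] [NormedSpace ℝ Z]
    (Φ : X → Z → Z) (DΦx : X → Z → (X →L[ℝ] Z)) (DΦz : X → Z → (Z →L[ℝ] Z)) :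
    ℕ → X × Z → (X × Z →L[ℝ] X × Z)
  | 0 => fun _ => ContinuousLinearMap.id ℝ (X × Z)
  | (R+1) => fun p => (DFit Φ DΦx DΦz R (p.1, Φ p.1 p.2)).comp
      ((ContinuousLinearMap.fst ℝ X Z).prod
        ((DΦx p.1 p.2).comp (ContinuousLinearMap.fst ℝ X Z) +
          (DΦz p.1 p.2).comp (ContinuousLinearMap.snd ℝ X Z)))

/-- Surrogate-bias bound for a stopped-base, fixed-depth tail surrogate:
the full gradient of `x ↦ Ψ_x^R(z_T(x))` minus the stop-gradient partial
equals `D_zΨ_x^R(z_T(x)) ∘ D_x z_T(x)`, whose norm is at most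
`L_A L_Φ ρ^R/(1−ρ)`. -/
theorem surrogate_bias_bound
    {X Z : Type*} [NormedAddCommGroup X] [NormedSpace ℝ X]
    [NormedAddCommGroup Z] [NormedSpace ℝ Z]
    (Φ A : X → Z → Z)
    (DΦx : X → Z → (X →L[ℝ] Z)) (DΦz : X → Z → (Z →L[ℝ] Z))
    (DAx : X → Z → (X →L[ℝ] Z)) (DAz : X → Z → (Z →L[ℝ] Z))
    (ρ LΦ LA : ℝ) (hρ0 : 0 ≤ ρ) (hρ1 : ρ < 1) (hL : 0 < LΦ) (hLA : 0 < LA)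
    (hderivΦ : ∀ x z, HasFDerivAt (fun p : X × Z => Φ p.1 p.2)
      ((DΦx x z).comp (ContinuousLinearMap.fst ℝ X Z) +
        (DΦz x z).comp (ContinuousLinearMap.snd ℝ X Z)) (x, z))
    (hderivA : ∀ x z, HasFDerivAt (fun p : X × Z => A p.1 p.2)
      ((DAx x z).comp (ContinuousLinearMap.fst ℝ X Z) +
        (DAz x z).comp (ContinuousLinearMap.snd ℝ X Z)) (x, z))
    (hΦz : ∀ x z, ‖DΦz x z‖ ≤ ρ) (hΦx : ∀ x z, ‖DΦx x z‖ ≤ LΦ)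
    (hAz : ∀ x z, ‖DAz x z‖ ≤ LA)
    (zseq : ℕ → X → Z) (z0 : Z) (hz0 : zseq 0 = fun _ => z0)
    (hrec : ∀ t x, zseq (t + 1) x = Φ x (zseq t x))
    (T R : ℕ) (Ψ : X → Z → Z) (hΨ : ∀ x z, Ψ x z = A x ((Φ x)^[R] z)) :
    ∀ x : X,
      fderiv ℝ (fun x' => Ψ x' (zseq T x')) x =
        fderiv ℝ (fun x' => Ψ x' (zseq T x)) x +
          (fderiv ℝ (fun z => Ψ x z) (zseq T x)).comp (fderiv ℝ (zseq T) x) ∧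
      ‖(fderiv ℝ (fun z => Ψ x z) (zseq T x)).comp (fderiv ℝ (zseq T) x)‖ ≤
        LA * LΦ / (1 - ρ) * ρ ^ R := by
  intro x
  have h1ρ : 0 < 1 - ρ := by linarith
  -- partial derivatives of Φ and A in each variable
  have hΦz' : ∀ a z, HasFDerivAt (fun z => Φ a z) (DΦz a z) z := by
    intro a z
    have h := (hderivΦ a z).comp z (HasFDerivAt.prodMk (hasFDerivAt_const a z) (hasFDerivAt_id z))
    convert h using 1
    ext v
    simp
    ext v
    simp
  have hAz' : ∀ a z, HasFDerivAt (fun z => A a z) (DAz a z) z := by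
    intro a z
    have h := (hderivA a z).comp z (HasFDerivAt.prodMk (hasFDerivAt_const a z) (hasFDerivAt_id z))
    convert h using 1
    ext v
    simp
    ext v
    simp
  -- derivative of zseq T
  have hzdiff : ∀ t a, HasFDerivAt (zseq t) (Wseq DΦx DΦz zseq t a) a := by
    intro t
    induction t with
    | zero =>
      intro a
      rw [hz0]
      exact hasFDerivAt_const z0 a
    | succ t ih =>
      intro a
      have hzfun : zseq (t + 1) = fun a => Φ a (zseq t a) := funext fun a => hrec t a
      rw [hzfun]
      have h := (hderivΦ a (zseq t a)).comp a (HasFDerivAt.prodMk (hasFDerivAt_id a) (ih a))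
      convert h using 1
      ext v
      simp [Wseq]
      ext v
      simp [Wseq]
  have hWbound : ∀ t a, ‖Wseq DΦx DΦz zseq t a‖ ≤ LΦ / (1 - ρ) := by
    intro t
    induction t with
    | zero =>
      intro a
      simp only [Wseq, norm_zero]
      positivity
    | succ t ih =>
      intro a
      have h1 : ‖(DΦz a (zseq t a)).comp (Wseq DΦx DΦz zseq t a)‖ ≤ ρ * (LΦ / (1 - ρ)) := by
        calc ‖(DΦz a (zseq t a)).comp (Wseq DΦx DΦz zseq t a)‖
            ≤ ‖DΦz a (zseq t a)‖ * ‖Wseq DΦx DΦz zseq t a‖ := opNorm_comp_le _ _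
          _ ≤ ρ * (LΦ / (1 - ρ)) := by
              apply mul_le_mul (hΦz a _) (ih a) (norm_nonneg _) hρ0
      have h2 : ‖Wseq DΦx DΦz zseq (t+1) a‖ ≤
          ‖DΦx a (zseq t a)‖ + ‖(DΦz a (zseq t a)).comp (Wseq DΦx DΦz zseq t a)‖ := by
        simpa [Wseq] using norm_add_le (DΦx a (zseq t a)) ((DΦz a (zseq t a)).comp (Wseq DΦx DΦz zseq t a))
      have h3 := hΦx a (zseq t a)
      have key : LΦ + ρ * (LΦ / (1 - ρ)) = LΦ / (1 - ρ) := by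
        field_simp
        ring
      linarith
  -- derivative of the z-iterate
  have hGdiff : ∀ n z, HasFDerivAt (fun z => (Φ x)^[n] z) (Gseq Φ DΦz x n z) z := by
    intro n
    induction n with
    | zero =>
      intro z
      exact hasFDerivAt_id z
    | succ n ih =>
      intro z
      have h := (ih (Φ x z)).comp z (hΦz' x z)
      have hfun : (fun z => (Φ x)^[n+1] z) = (fun z => (Φ x)^[n] z) ∘ (fun z => Φ x z) := by
        funext z
        simp [Function.iterate_succ_apply]
      rw [hfun]
      simpa [Gseq] using h
  have hGbound : ∀ n z, ‖Gseq Φ DΦz x n z‖ ≤ ρ ^ n := by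
    intro n
    induction n with
    | zero =>
      intro z
      simpa [Gseq] using ContinuousLinearMap.norm_id_le (𝕜 := ℝ) (E := Z)
    | succ n ih =>
      intro z
      calc ‖Gseq Φ DΦz x (n+1) z‖ ≤ ‖Gseq Φ DΦz x n (Φ x z)‖ * ‖DΦz x z‖ := by
            simpa [Gseq] using opNorm_comp_le (Gseq Φ DΦz x n (Φ x z)) (DΦz x z)
        _ ≤ ρ ^ n * ρ := mul_le_mul (ih _) (hΦz x z) (norm_nonneg _) (pow_nonneg hρ0 n)
        _ = ρ ^ (n + 1) := (pow_succ ρ n).symm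
  -- joint map F and its iterates
  set F : X × Z → X × Z := fun p => (p.1, Φ p.1 p.2) with hF_def
  have hF : ∀ p : X × Z, HasFDerivAt F
      ((ContinuousLinearMap.fst ℝ X Z).prod
        ((DΦx p.1 p.2).comp (ContinuousLinearMap.fst ℝ X Z) +
          (DΦz p.1 p.2).comp (ContinuousLinearMap.snd ℝ X Z))) p := by
    rintro ⟨a, b⟩
    exact HasFDerivAt.prodMk (hasFDerivAt_fst) (hderivΦ a b)
  have hFit : ∀ n (p : X × Z), HasFDerivAt F^[n] (DFit Φ DΦx DΦz n p) p := by
    intro n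
    induction n with
    | zero =>
      intro p
      simpa [DFit] using hasFDerivAt_id p
    | succ n ih =>
      intro p
      have h := (ih (F p)).comp p (hF p)
      rw [Function.iterate_succ]
      simpa [DFit, hF_def] using h
  have hFit_eq : ∀ n (p : X × Z), F^[n] p = (p.1, (Φ p.1)^[n] p.2) := by
    intro n
    induction n with
    | zero => intro p; simp
    | succ n ih =>
      intro p
      rw [Function.iterate_succ_apply, ih]
      simp [hF_def, Function.iterate_succ_apply]
  -- joint derivative of Ψ
  have hΨjoint : ∀ p : X × Z, HasFDerivAt (fun p : X × Z => Ψ p.1 p.2)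
      ((((DAx (F^[R] p).1 (F^[R] p).2).comp (ContinuousLinearMap.fst ℝ X Z) +
          (DAz (F^[R] p).1 (F^[R] p).2).comp (ContinuousLinearMap.snd ℝ X Z))).comp
        (DFit Φ DΦx DΦz R p)) p := by
    intro p
    have hA : HasFDerivAt (fun q : X × Z => A q.1 q.2)
        ((DAx (F^[R] p).1 (F^[R] p).2).comp (ContinuousLinearMap.fst ℝ X Z) +
          (DAz (F^[R] p).1 (F^[R] p).2).comp (ContinuousLinearMap.snd ℝ X Z)) (F^[R] p) := by
      have := hderivA (F^[R] p).1 (F^[R] p).2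
      simpa using this
    have h := hA.comp p (hFit R p)
    have hfun : (fun p : X × Z => Ψ p.1 p.2) = (fun q : X × Z => A q.1 q.2) ∘ F^[R] := by
      funext q
      simp [hΨ, Function.comp, hFit_eq]
    rw [hfun]
    exact h
  set ζ := zseq T x with hζ
  set W := Wseq DΦx DΦz zseq T x with hW
  set DΨ := (((DAx (F^[R] (x, ζ)).1 (F^[R] (x, ζ)).2).comp (ContinuousLinearMap.fst ℝ X Z) +
          (DAz (F^[R] (x, ζ)).1 (F^[R] (x, ζ)).2).comp (ContinuousLinearMap.snd ℝ X Z))).comp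
        (DFit Φ DΦx DΦz R (x, ζ)) with hDΨ
  have h_full : HasFDerivAt (fun x' => Ψ x' (zseq T x'))
      (DΨ.comp ((ContinuousLinearMap.id ℝ X).prod W)) x := by
    have h := (hΨjoint (x, ζ)).comp x (HasFDerivAt.prodMk (hasFDerivAt_id x) (hzdiff T x))
    exact h
  have h_px : HasFDerivAt (fun x' => Ψ x' ζ)
      (DΨ.comp ((ContinuousLinearMap.id ℝ X).prod 0)) x := by
    have h := (hΨjoint (x, ζ)).comp x (HasFDerivAt.prodMk (hasFDerivAt_id x) (hasFDerivAt_const (𝕜 := ℝ) ζ x))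
    exact h
  have h_pz : HasFDerivAt (fun z => Ψ x z)
      (DΨ.comp ((0 : Z →L[ℝ] X).prod (ContinuousLinearMap.id ℝ Z))) ζ := by
    have h := (hΨjoint (x, ζ)).comp ζ (HasFDerivAt.prodMk (hasFDerivAt_const x ζ) (hasFDerivAt_id ζ))
    exact h
  have h_pz' : HasFDerivAt (fun z => Ψ x z)
      ((DAz x ((Φ x)^[R] ζ)).comp (Gseq Φ DΦz x R ζ)) ζ := by
    have h := (hAz' x ((Φ x)^[R] ζ)).comp ζ (hGdiff R ζ)
    have hfun : (fun z => Ψ x z) = (fun z => A x z) ∘ (fun z => (Φ x)^[R] z) := by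
      funext z
      simp [hΨ, Function.comp]
    rw [hfun]
    exact h
  have hWd : fderiv ℝ (zseq T) x = W := (hzdiff T x).fderiv
  constructor
  · rw [h_full.fderiv, h_px.fderiv, h_pz.fderiv, hWd]
    ext v
    simp only [ContinuousLinearMap.comp_apply, ContinuousLinearMap.add_apply,
      ContinuousLinearMap.prod_apply, ContinuousLinearMap.coe_id', id_eq,
      ContinuousLinearMap.zero_apply]
    rw [← map_add]
    simp
  · rw [h_pz'.fderiv, hWd]
    have hb1 : ‖(DAz x ((Φ x)^[R] ζ)).comp (Gseq Φ DΦz x R ζ)‖ ≤ LA * ρ ^ R := by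
      calc ‖(DAz x ((Φ x)^[R] ζ)).comp (Gseq Φ DΦz x R ζ)‖
          ≤ ‖DAz x ((Φ x)^[R] ζ)‖ * ‖Gseq Φ DΦz x R ζ‖ := opNorm_comp_le _ _
        _ ≤ LA * ρ ^ R := mul_le_mul (hAz _ _) (hGbound R ζ) (norm_nonneg _) hLA.le
    calc ‖((DAz x ((Φ x)^[R] ζ)).comp (Gseq Φ DΦz x R ζ)).comp W‖
        ≤ ‖(DAz x ((Φ x)^[R] ζ)).comp (Gseq Φ DΦz x R ζ)‖ * ‖W‖ := opNorm_comp_le _ _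
      _ ≤ (LA * ρ ^ R) * (LΦ / (1 - ρ)) := by
          apply mul_le_mul hb1 (hWbound T x) (norm_nonneg _)
          positivity
      _ = LA * LΦ / (1 - ρ) * ρ ^ R := by ring
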